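/- Let F be a field and let M be an invertible n×n matrix over F. Then there exist unitriangular matrices U, V ∈ T_n(F) such that U·M·V is an invertible rook matrix, that is, a matrix having exactly one nonzero entry in each row and exactly one nonzero entry in each column (a monomial matrix). -/

import Mathlib

/-- A square matrix is unitriangular if it is upper triangular with 1's on the diagonal. -/
def Matrix.IsUnitriangular {n : ℕ} {R : Type*} [Zero R] [One R]
    (A : Matrix (Fin n) (Fin n) R) : Prop :=
  (∀ i, A i i = 1) ∧ ∀ i j : Fin n, j < i → A i j = 0

/-- A matrix is a rook matrix if every row and every column contains
at most one nonzero entry. -/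
def Matrix.IsRook {n m : ℕ} {F : Type*} [Zero F]
    (R : Matrix (Fin n) (Fin m) F) : Prop :=
  (∀ i j j', R i j ≠ 0 → R i j' ≠ 0 → j = j') ∧
  (∀ i i' j, R i j ≠ 0 → R i' j ≠ 0 → i = i')

section Aux

variable {F : Type*} [Field F] {n : ℕ}

lemma unitri_one : (1 : Matrix (Fin n) (Fin n) F).IsUnitriangular := by
  constructor
  · intro i; simp
  · intro i j h; simp [Matrix.one_apply, (ne_of_lt h).symm]

lemma unitri_mul {A B : Matrix (Fin n) (Fin n) F}
    (hA : A.IsUnitriangular) (hB : B.IsUnitriangular) : (A * B).IsUnitriangular := by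
  constructor
  · intro i
    rw [Matrix.mul_apply]
    rw [Finset.sum_eq_single i]
    · rw [hA.1 i, hB.1 i, one_mul]
    · intro l _ hl
      rcases lt_or_gt_of_ne hl with h | h
      · rw [hA.2 i l h, zero_mul]
      · rw [hB.2 l i h, mul_zero]
    · simp
  · intro i j hji
    rw [Matrix.mul_apply]
    apply Finset.sum_eq_zero
    intro l _
    rcases lt_or_ge l i with h | h
    · rw [hA.2 i l h, zero_mul]
    · rw [hB.2 l j (lt_of_lt_of_le hji h), mul_zero]

lemma unitri_isUnit {A : Matrix (Fin n) (Fin n) F} (hA : A.IsUnitriangular) : IsUnit A := by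
  rw [Matrix.isUnit_iff_isUnit_det]
  have hbt : A.BlockTriangular id := by
    intro i j hij
    exact hA.2 i j hij
  rw [Matrix.det_of_upperTriangular hbt]
  simp [hA.1]

/-- The key induction: after processing the first `k` columns, there are unitriangular
matrices `U`, `V` and a pivot map `p` (injective on the first `k` columns) such that
each of the first `k` columns of `U * M * V` has its unique nonzero entry at the pivot
row, and each pivot row has its unique nonzero entry in that column. -/
lemma bruhat_aux (M : Matrix (Fin n) (Fin n) F) (hM : IsUnit M) :
    ∀ k, k ≤ n → ∃ (U V : Matrix (Fin n) (Fin n) F) (p : Fin n → Fin n),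
      U.IsUnitriangular ∧ V.IsUnitriangular ∧
      (∀ j j' : Fin n, j.val < k → j'.val < k → p j = p j' → j = j') ∧
      (∀ j : Fin n, j.val < k →
        (U * M * V) (p j) j ≠ 0 ∧
        (∀ i, i ≠ p j → (U * M * V) i j = 0) ∧
        (∀ j', j' ≠ j → (U * M * V) (p j) j' = 0)) := by
  classical
  intro k
  induction k with
  | zero =>
    intro _
    exact ⟨1, 1, id, unitri_one, unitri_one, fun j j' h => absurd h (Nat.not_lt_zero _),
      fun j h => absurd h (Nat.not_lt_zero _)⟩
  | succ k ih =>
    intro hk1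
    have hk : k < n := lt_of_lt_of_le (Nat.lt_succ_self k) hk1
    obtain ⟨U, V, p, hU, hV, hinj, hprop⟩ := ih (le_of_lt hk)
    set B := U * M * V with hBdef
    have hBunit : IsUnit B := ((unitri_isUnit hU).mul hM).mul (unitri_isUnit hV)
    set kk : Fin n := ⟨k, hk⟩ with hkk
    -- column kk of B is nonzero
    have hcol : ∃ i, B i kk ≠ 0 := by
      by_contra h
      push_neg at h
      have hdet : B.det = 0 := Matrix.det_eq_zero_of_column_eq_zero kk h
      have := (Matrix.isUnit_iff_isUnit_det B).mp hBunit
      rw [hdet] at this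
      exact (not_isUnit_zero : ¬ IsUnit (0 : F)) this
    obtain ⟨iw, hiw⟩ := hcol
    obtain ⟨i0, hi0, hmax⟩ : ∃ i0, B i0 kk ≠ 0 ∧ ∀ i, i0 < i → B i kk = 0 := by
      set S : Finset (Fin n) := Finset.univ.filter (fun i => B i kk ≠ 0) with hS
      have hSne : S.Nonempty := ⟨iw, by simp [hS, hiw]⟩
      refine ⟨S.max' hSne, ?_, ?_⟩
      · have h2 := S.max'_mem hSne
        simp only [hS, Finset.mem_filter] at h2
        exact h2.2
      · intro i hi
        by_contra h
        have hiS : i ∈ S := by simp [hS, h]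
        exact absurd (S.le_max' i hiS) (not_le_of_gt hi)
    -- pivot rows have zero in column kk, so i0 is not an old pivot
    have hpivzero : ∀ j : Fin n, j.val < k → B (p j) kk = 0 := by
      intro j hj
      exact (hprop j hj).2.2 kk (by
        intro h
        rw [← h] at hj
        exact lt_irrefl k hj)
    have hi0p : ∀ j : Fin n, j.val < k → p j ≠ i0 := by
      intro j hj h
      exact hi0 (h ▸ hpivzero j hj)
    -- the elimination coefficients
    set γ : Fin n → F := fun i => if i < i0 then -B i kk / B i0 kk else 0 with hγ
    set δ : Fin n → F := fun j => if kk < j then -B i0 j / B i0 kk else 0 with hδ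
    have hγ0 : γ i0 = 0 := by simp [hγ]
    have hδ0 : δ kk = 0 := by simp [hδ]
    set U₁ : Matrix (Fin n) (Fin n) F :=
      1 + Matrix.of (fun i l => if l = i0 then γ i else 0) with hU₁
    set V₁ : Matrix (Fin n) (Fin n) F :=
      1 + Matrix.of (fun l j => if l = kk then δ j else 0) with hV₁
    have hU₁tri : U₁.IsUnitriangular := by
      constructor
      · intro i
        by_cases h : i = i0 <;> simp [hU₁, Matrix.one_apply, h, hγ0]
      · intro i j hji
        have : ¬ (i < j) := not_lt_of_gt hji
        by_cases h : j = i0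
        · subst h
          simp [hU₁, Matrix.one_apply, (ne_of_lt hji).symm, hγ, this]
        · simp [hU₁, Matrix.one_apply, (ne_of_lt hji).symm, h]
    have hV₁tri : V₁.IsUnitriangular := by
      constructor
      · intro i
        by_cases h : i = kk <;> simp [hV₁, Matrix.one_apply, h, hδ0]
      · intro i j hji
        by_cases h : i = kk
        · subst h
          have : ¬ (kk < j) := not_lt_of_gt hji
          simp [hV₁, Matrix.one_apply, (ne_of_lt hji).symm, hδ, this]
        · simp [hV₁, Matrix.one_apply, (ne_of_lt hji).symm, h]
    -- entrywise formula for B' = U₁ * B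
    set B' := U₁ * B with hB'def
    have hB' : ∀ i j, B' i j = B i j + γ i * B i0 j := by
      intro i j
      rw [hB'def, hU₁, Matrix.add_mul, Matrix.one_mul, Matrix.add_apply, Matrix.mul_apply]
      congr 1
      rw [Finset.sum_eq_single i0]
      · simp
      · intro l _ hl; simp [hl]
      · simp
    have hB'kk : ∀ i, B' i kk = if i = i0 then B i0 kk else 0 := by
      intro i
      rw [hB' i kk]
      rcases lt_trichotomy i i0 with h | h | h
      · rw [if_neg (ne_of_lt h)]
        simp only [hγ, if_pos h]
        field_simp
        ring
      · subst h; simp [hγ0]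
      · rw [if_neg (ne_of_gt h), hmax i h]
        simp [hγ, not_lt_of_gt h]
    -- entrywise formula for C = B' * V₁
    set C := B' * V₁ with hCdef
    have hC : ∀ i j, C i j = B' i j + (if i = i0 then B i0 kk else 0) * δ j := by
      intro i j
      rw [hCdef, hV₁, Matrix.mul_add, Matrix.mul_one, Matrix.add_apply, Matrix.mul_apply]
      congr 1
      rw [Finset.sum_eq_single kk]
      · rw [hB'kk i]; simp
      · intro l _ hl; simp [hl]
      · simp
    -- assemble
    refine ⟨U₁ * U, V * V₁, Function.update p kk i0, unitri_mul hU₁tri hU,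
      unitri_mul hV hV₁tri, ?_, ?_⟩
    · -- injectivity
      intro j j' hj hj' he
      by_cases h1 : j = kk <;> by_cases h2 : j' = kk
      · rw [h1, h2]
      · exfalso
        have hj'k : j'.val < k := by
          rcases Nat.lt_succ_iff_lt_or_eq.mp hj' with h | h
          · exact h
          · exact absurd (Fin.ext h : j' = kk) h2
        rw [h1, Function.update_self, Function.update_of_ne h2] at he
        exact hi0p j' hj'k he.symm
      · exfalso
        have hjk : j.val < k := by
          rcases Nat.lt_succ_iff_lt_or_eq.mp hj with h | h
          · exact h
          · exact absurd (Fin.ext h : j = kk) h1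
        rw [h2, Function.update_self, Function.update_of_ne h1] at he
        exact hi0p j hjk he
      · have hjk : j.val < k := by
          rcases Nat.lt_succ_iff_lt_or_eq.mp hj with h | h
          · exact h
          · exact absurd (Fin.ext h : j = kk) h1
        have hj'k : j'.val < k := by
          rcases Nat.lt_succ_iff_lt_or_eq.mp hj' with h | h
          · exact h
          · exact absurd (Fin.ext h : j' = kk) h2
        rw [Function.update_of_ne h1, Function.update_of_ne h2] at he
        exact hinj j j' hjk hj'k he
    · -- pivot properties
      have hCMV : U₁ * U * M * (V * V₁) = C := by
        rw [hCdef, hB'def, hBdef]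
        noncomm_ring
      rw [hCMV]
      intro j hj
      by_cases h1 : j = kk
      · -- new column kk
        subst h1
        rw [Function.update_self]
        refine ⟨?_, ?_, ?_⟩
        · simpa [hC, hB'kk, hδ0] using hi0
        · intro i hi
          simp [hC, hB'kk, hδ0, hi]
        · intro j' hj'
          have hbase : C i0 j' = B i0 j' + B i0 kk * δ j' := by
            simp [hC, hB', hγ0]
          rcases lt_trichotomy j' kk with h | h | h
          · -- j' left of kk : old column
            have hj'k : j'.val < k := h
            have hz : B i0 j' = 0 := (hprop j' hj'k).2.1 i0 (fun he => hi0p j' hj'k he.symm)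
            rw [hbase, hz]
            simp [hδ, not_lt_of_gt h]
          · exact absurd h hj'
          · -- j' right of kk : eliminated
            rw [hbase]
            have hd : δ j' = -B i0 j' / B i0 kk := by simp [hδ, h]
            rw [hd]
            field_simp
            ring
      · -- old column j
        have hjk : j.val < k := by
          rcases Nat.lt_succ_iff_lt_or_eq.mp hj with h | h
          · exact h
          · exact absurd (Fin.ext h : j = kk) h1
        have hjlt : j < kk := hjk
        have hδj : δ j = 0 := by simp [hδ, not_lt_of_gt hjlt]
        have hγpj : γ (p j) = 0 := by
          simp [hγ, hpivzero j hjk]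
        have hBi0j : B i0 j = 0 := (hprop j hjk).2.1 i0 (fun he => hi0p j hjk he.symm)
        rw [Function.update_of_ne h1]
        refine ⟨?_, ?_, ?_⟩
        · simpa [hC, hB', hδj, hBi0j] using (hprop j hjk).1
        · intro i hi
          simp [hC, hB', hδj, hBi0j, (hprop j hjk).2.1 i hi]
        · intro j' hj'
          simp [hC, hB', hγpj, hδj, hi0p j hjk, (hprop j hjk).2.2 j' hj']

end Aux

/-- Enhanced Bruhat decomposition for an invertible matrix: `U * M * V` can be made a
monomial matrix (exactly one nonzero entry in each row and each column) with `U`, `V`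
unitriangular. -/
theorem enhanced_bruhat_invertible {F : Type*} [Field F] {n : ℕ}
    (M : Matrix (Fin n) (Fin n) F) (hM : IsUnit M) :
    ∃ U V : Matrix (Fin n) (Fin n) F,
      U.IsUnitriangular ∧ V.IsUnitriangular ∧
      (∀ i, ∃! j, (U * M * V) i j ≠ 0) ∧
      (∀ j, ∃! i, (U * M * V) i j ≠ 0) := by
  obtain ⟨U, V, p, hU, hV, hinj, hprop⟩ := bruhat_aux M hM n (le_refl n)
  have hinj' : Function.Injective p := fun j j' h => hinj j j' j.isLt j'.isLt h
  have hsurj : Function.Surjective p := Finite.surjective_of_injective hinj'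
  refine ⟨U, V, hU, hV, ?_, ?_⟩
  · intro i
    obtain ⟨j, hj⟩ := hsurj i
    refine ⟨j, hj ▸ (hprop j j.isLt).1, ?_⟩
    intro j' hj'
    have : i = p j' := by
      by_contra h
      exact hj' ((hprop j' j'.isLt).2.1 i h)
    exact hinj' (this ▸ hj.symm : p j' = p j)
  · intro j
    refine ⟨p j, (hprop j j.isLt).1, ?_⟩
    intro i hi
    by_contra h
    exact hi ((hprop j j.isLt).2.1 i h)
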